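/- Let (r,s) be one of (p,4) or (p,2q), where p and q are odd primes. Then for every nontrivial normal subgroup L of H(r,s), the normal quotient Γ(r,s)_L either has at most 2 vertices or is isomorphic to a cycle graph C_m for some m ≥ 3; moreover the normal quotient of Γ(r,s) by ⟨μ⟩ is isomorphic to the cycle C_s and the normal quotient by ⟨ν²⟩ is isomorphic to the cycle C_{2r}. In particular, (Γ(r,s), H(r,s)) is basic of cycle type. -/

import Mathlib

open SimpleGraph

namespace OG4

variable {V : Type*} {W : Type*}

/-! ### Normal quotients, cycles, and basic pairs -/

/-- The setoid of orbits of a group `N` of permutations of `V`. -/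
def orbitSetoid (N : Subgroup (Equiv.Perm V)) : Setoid V := MulAction.orbitRel N V

/-- The (normal) quotient graph of a graph `Γ` with respect to a group `N` of permutations:
its vertices are the `N`-orbits, two distinct orbits being adjacent iff some vertex of one is
adjacent in `Γ` to some vertex of the other. -/
def quotientGraph (Γ : SimpleGraph V) (N : Subgroup (Equiv.Perm V)) :
    SimpleGraph (Quotient (orbitSetoid N)) :=
  SimpleGraph.fromRel fun a b =>
    ∃ x y : V, Quotient.mk (orbitSetoid N) x = a ∧ Quotient.mk (orbitSetoid N) y = b ∧ Γ.Adj x y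

/-- `N` is a normal subgroup of the subgroup `G` (of some ambient group). -/
def NormalIn {G : Type*} [Group G] (N H : Subgroup G) : Prop :=
  N ≤ H ∧ ∀ h ∈ H, ∀ n ∈ N, h * n * h⁻¹ ∈ N

/-- A graph is isomorphic to a cycle graph `C_m` for some `m ≥ 3`. -/
def IsoCycle (Δ : SimpleGraph W) : Prop :=
  ∃ m : ℕ, 3 ≤ m ∧ Nonempty (Δ ≃g SimpleGraph.cycleGraph m)

/-- Every normal quotient of `(Γ, G)` relative to a nontrivial normal subgroup is degenerate:
it has at most 2 vertices or is a cycle. -/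
def IsBasic (Γ : SimpleGraph V) (G : Subgroup (Equiv.Perm V)) : Prop :=
  ∀ N : Subgroup (Equiv.Perm V), NormalIn N G → N ≠ ⊥ →
    Nat.card (Quotient (orbitSetoid N)) ≤ 2 ∨ IsoCycle (quotientGraph Γ N)

/-- `(Γ, G)` is basic of cycle type. -/
def BasicOfCycleType (Γ : SimpleGraph V) (G : Subgroup (Equiv.Perm V)) : Prop :=
  IsBasic Γ G ∧
    ∃ N : Subgroup (Equiv.Perm V), NormalIn N G ∧ N ≠ ⊥ ∧ IsoCycle (quotientGraph Γ N)

/-- The kernel of the action of `G` on the set of `N`-orbits. -/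
def orbitKernel (G N : Subgroup (Equiv.Perm V)) : Subgroup (Equiv.Perm V) where
  carrier := {g | g ∈ G ∧ ∀ x : V,
    Quotient.mk (orbitSetoid N) (g x) = Quotient.mk (orbitSetoid N) x}
  one_mem' := ⟨G.one_mem, fun x => by simp⟩
  mul_mem' := by
    rintro a b ⟨haG, ha⟩ ⟨hbG, hb⟩
    refine ⟨G.mul_mem haG hbG, fun x => ?_⟩
    rw [Equiv.Perm.mul_apply, ha (b x), hb x]
  inv_mem' := by
    rintro a ⟨haG, ha⟩
    refine ⟨G.inv_mem haG, fun x => ?_⟩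
    have h := ha (a⁻¹ x)
    rw [← Equiv.Perm.mul_apply, mul_inv_cancel, Equiv.Perm.one_apply] at h
    exact h.symm

/-- `(Γ, G)` has a pair of independent cyclic normal quotients. -/
def HasIndepCyclicQuotients (Γ : SimpleGraph V) (G : Subgroup (Equiv.Perm V)) : Prop :=
  ∃ N M : Subgroup (Equiv.Perm V), NormalIn N G ∧ NormalIn M G ∧
    IsoCycle (quotientGraph Γ N) ∧ IsoCycle (quotientGraph Γ M) ∧
    ¬ IsoCycle (quotientGraph Γ (orbitKernel G N ⊓ orbitKernel G M))

/-- `(Γ, G)` is basic of independent-cycle type. -/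
def BasicOfIndependentCycleType (Γ : SimpleGraph V) (G : Subgroup (Equiv.Perm V)) : Prop :=
  IsBasic Γ G ∧ HasIndepCyclicQuotients Γ G

/-- Isomorphism of graph-group pairs: a graph isomorphism conjugating one group onto the other. -/
def PairIso (Γ : SimpleGraph V) (G : Subgroup (Equiv.Perm V))
    (Δ : SimpleGraph W) (H : Subgroup (Equiv.Perm W)) : Prop :=
  ∃ e : Γ ≃g Δ, ∀ h : Equiv.Perm W, h ∈ H ↔ ∃ g ∈ G, e.toEquiv.permCongr g = h

/-! ### Minimal normal subgroups -/

/-- `M` is a minimal normal subgroup of the ambient group. -/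
def IsMinimalNormal {G : Type*} [Group G] (M : Subgroup G) : Prop :=
  M.Normal ∧ M ≠ ⊥ ∧ ∀ N : Subgroup G, N.Normal → N ≤ M → N = ⊥ ∨ N = M

/-- `M` is a minimal normal subgroup of the subgroup `H`. -/
def IsMinimalNormalIn {G : Type*} [Group G] (M H : Subgroup G) : Prop :=
  NormalIn M H ∧ M ≠ ⊥ ∧ ∀ N : Subgroup G, NormalIn N H → N ≤ M → N = ⊥ ∨ N = M

/-! ### The graphs `Γ(r,s)` and their automorphisms -/

/-- In `Γ(r,s)`, the vertex `(i,j)` is joined to the four vertices `(i ± 1, j ± 1)`. -/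
def gammaRel (r s : ℕ) (x y : ZMod r × ZMod s) : Prop :=
  (y.1 = x.1 + 1 ∨ y.1 = x.1 - 1) ∧ (y.2 = x.2 + 1 ∨ y.2 = x.2 - 1)

/-- The graph `Γ(r,s)` on `ℤ_r × ℤ_s`. -/
def Gamma (r s : ℕ) : SimpleGraph (ZMod r × ZMod s) := SimpleGraph.fromRel (gammaRel r s)

/-- `μ : (i,j) ↦ (i+1, j)`. -/
def mu (r s : ℕ) : Equiv.Perm (ZMod r × ZMod s) :=
  (Equiv.addRight (1 : ZMod r)).prodCongr (Equiv.refl (ZMod s))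

/-- `ν : (i,j) ↦ (i, j+1)`. -/
def nu (r s : ℕ) : Equiv.Perm (ZMod r × ZMod s) :=
  (Equiv.refl (ZMod r)).prodCongr (Equiv.addRight (1 : ZMod s))

/-- `σ : (i,j) ↦ (-i, j)`. -/
def sigma (r s : ℕ) : Equiv.Perm (ZMod r × ZMod s) :=
  (Equiv.neg (ZMod r)).prodCongr (Equiv.refl (ZMod s))

/-- `τ : (i,j) ↦ (-i, -j)`. -/
def tau (r s : ℕ) : Equiv.Perm (ZMod r × ZMod s) :=
  (Equiv.neg (ZMod r)).prodCongr (Equiv.neg (ZMod s))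

/-- `σν : (i,j) ↦ (-i, j+1)`. -/
def sigmaNu (r s : ℕ) : Equiv.Perm (ZMod r × ZMod s) :=
  (Equiv.neg (ZMod r)).prodCongr (Equiv.addRight (1 : ZMod s))

/-- `μν : (i,j) ↦ (i+1, j+1)`. -/
def muNu (r s : ℕ) : Equiv.Perm (ZMod r × ZMod s) :=
  (Equiv.addRight (1 : ZMod r)).prodCongr (Equiv.addRight (1 : ZMod s))

/-- `σμν : (i,j) ↦ (-(i+1), j+1)`. -/
def sigmaMuNu (r s : ℕ) : Equiv.Perm (ZMod r × ZMod s) :=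
  ((Equiv.addRight (1 : ZMod r)).trans (Equiv.neg (ZMod r))).prodCongr
    (Equiv.addRight (1 : ZMod s))

/-- `μ² : (i,j) ↦ (i+2, j)`. -/
def muSq (r s : ℕ) : Equiv.Perm (ZMod r × ZMod s) :=
  (Equiv.addRight (2 : ZMod r)).prodCongr (Equiv.refl (ZMod s))

/-- `ν² : (i,j) ↦ (i, j+2)`. -/
def nuSq (r s : ℕ) : Equiv.Perm (ZMod r × ZMod s) :=
  (Equiv.refl (ZMod r)).prodCongr (Equiv.addRight (2 : ZMod s))

/-- `μ^k : (i,j) ↦ (i+k, j)`. -/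
def muPow (r s k : ℕ) : Equiv.Perm (ZMod r × ZMod s) :=
  (Equiv.addRight ((k : ZMod r))).prodCongr (Equiv.refl (ZMod s))

/-- `μ^k ν² : (i,j) ↦ (i+k, j+2)`. -/
def muPowNuSq (r s k : ℕ) : Equiv.Perm (ZMod r × ZMod s) :=
  (Equiv.addRight ((k : ZMod r))).prodCongr (Equiv.addRight (2 : ZMod s))

/-- `G(r,s) = ⟨μ, ν, σ⟩`. -/
def Ggroup (r s : ℕ) : Subgroup (Equiv.Perm (ZMod r × ZMod s)) :=
  Subgroup.closure {mu r s, nu r s, sigma r s}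

/-- `H(r,s) = ⟨μ, σν, τ⟩`. -/
def Hgroup (r s : ℕ) : Subgroup (Equiv.Perm (ZMod r × ZMod s)) :=
  Subgroup.closure {mu r s, sigmaNu r s, tau r s}

/-! ### The graphs `Γ⁺(r,s)` (for `r`, `s` even) -/

/-- `X⁺`: the set of `(i,j)` with `i` and `j` of the same parity. -/
def XPlus (r s : ℕ) : Set (ZMod r × ZMod s) := {x | x.1.val % 2 = x.2.val % 2}

/-- `Γ⁺(r,s)`, the subgraph of `Γ(r,s)` induced on `X⁺`. -/
def GammaPlus (r s : ℕ) : SimpleGraph (XPlus r s) :=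
  SimpleGraph.induce (XPlus r s) (Gamma r s)

section parity

lemma val_add_one_mod_two (r : ℕ) (hr : 2 ∣ r) (hr0 : r ≠ 0) (i : ZMod r) :
    (i + 1).val % 2 = (i.val + 1) % 2 := by
  haveI : NeZero r := ⟨hr0⟩
  haveI : Fact (1 < r) := ⟨by have := Nat.le_of_dvd (Nat.pos_of_ne_zero hr0) hr; omega⟩
  rw [ZMod.val_add, Nat.mod_mod_of_dvd _ hr, ZMod.val_one]

lemma val_add_two_mod_two (r : ℕ) (hr : 2 ∣ r) (hr0 : r ≠ 0) (i : ZMod r) :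
    (i + 2).val % 2 = i.val % 2 := by
  have h1 := val_add_one_mod_two r hr hr0 i
  have h2 := val_add_one_mod_two r hr hr0 (i + 1)
  rw [show i + 1 + 1 = i + 2 by ring] at h2
  omega

lemma val_neg_mod_two (r : ℕ) (hr : 2 ∣ r) (hr0 : r ≠ 0) (i : ZMod r) :
    (-i).val % 2 = i.val % 2 := by
  haveI : NeZero r := ⟨hr0⟩
  rcases eq_or_ne i 0 with h | h
  · simp [h]
  · have h1 : (-i).val = r - i.val := by rw [ZMod.neg_val]; simp [h]
    have h2 : i.val < r := ZMod.val_lt i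
    have h3 : i.val ≠ 0 := fun hh => h ((ZMod.val_eq_zero i).mp hh)
    obtain ⟨t, rfl⟩ := hr
    rw [h1]
    omega

end parity

section plusPerms

variable (r s : ℕ)

/-- The restriction of `μ²` to `X⁺`. -/
def muSqP (hr : 2 ∣ r) (hr0 : r ≠ 0) : Equiv.Perm (XPlus r s) :=
  (muSq r s).subtypePerm (by
    intro x
    have h := val_add_two_mod_two r hr hr0 x.1
    simp only [XPlus, Set.mem_setOf_eq, muSq, Equiv.prodCongr_apply, Prod.map,
      Equiv.coe_addRight, Equiv.refl_apply]
    omega)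

/-- The restriction of `ν²` to `X⁺`. -/
def nuSqP (hs : 2 ∣ s) (hs0 : s ≠ 0) : Equiv.Perm (XPlus r s) :=
  (nuSq r s).subtypePerm (by
    intro x
    have h := val_add_two_mod_two s hs hs0 x.2
    simp only [XPlus, Set.mem_setOf_eq, nuSq, Equiv.prodCongr_apply, Prod.map,
      Equiv.coe_addRight, Equiv.refl_apply]
    omega)

/-- The restriction of `μν` to `X⁺`. -/
def muNuP (hr : 2 ∣ r) (hr0 : r ≠ 0) (hs : 2 ∣ s) (hs0 : s ≠ 0) : Equiv.Perm (XPlus r s) :=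
  (muNu r s).subtypePerm (by
    intro x
    have h1 := val_add_one_mod_two r hr hr0 x.1
    have h2 := val_add_one_mod_two s hs hs0 x.2
    simp only [XPlus, Set.mem_setOf_eq, muNu, Equiv.prodCongr_apply, Prod.map,
      Equiv.coe_addRight]
    omega)

/-- The restriction of `σ` to `X⁺`. -/
def sigmaP (hr : 2 ∣ r) (hr0 : r ≠ 0) : Equiv.Perm (XPlus r s) :=
  (sigma r s).subtypePerm (by
    intro x
    have h := val_neg_mod_two r hr hr0 x.1
    simp only [XPlus, Set.mem_setOf_eq, sigma, Equiv.prodCongr_apply, Prod.map,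
      Equiv.neg_apply, Equiv.refl_apply]
    omega)

/-- The restriction of `τ` to `X⁺`. -/
def tauP (hr : 2 ∣ r) (hr0 : r ≠ 0) (hs : 2 ∣ s) (hs0 : s ≠ 0) : Equiv.Perm (XPlus r s) :=
  (tau r s).subtypePerm (by
    intro x
    have h1 := val_neg_mod_two r hr hr0 x.1
    have h2 := val_neg_mod_two s hs hs0 x.2
    simp only [XPlus, Set.mem_setOf_eq, tau, Equiv.prodCongr_apply, Prod.map,
      Equiv.neg_apply]
    omega)

/-- The restriction of `σμν` to `X⁺`. -/
def sigmaMuNuP (hr : 2 ∣ r) (hr0 : r ≠ 0) (hs : 2 ∣ s) (hs0 : s ≠ 0) :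
    Equiv.Perm (XPlus r s) :=
  (sigmaMuNu r s).subtypePerm (by
    intro x
    have h1 := val_neg_mod_two r hr hr0 (x.1 + 1)
    have h2 := val_add_one_mod_two r hr hr0 x.1
    have h3 := val_add_one_mod_two s hs hs0 x.2
    simp only [XPlus, Set.mem_setOf_eq, sigmaMuNu, Equiv.prodCongr_apply, Prod.map,
      Equiv.trans_apply, Equiv.coe_addRight, Equiv.neg_apply]
    omega)

/-- `G⁺(r,s) = ⟨μ², μν, σ⟩` acting on `X⁺`. -/
def GPlusGroup (hr : 2 ∣ r) (hr0 : r ≠ 0) (hs : 2 ∣ s) (hs0 : s ≠ 0) :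
    Subgroup (Equiv.Perm (XPlus r s)) :=
  Subgroup.closure {muSqP r s hr hr0, muNuP r s hr hr0 hs hs0, sigmaP r s hr hr0}

/-- `H⁺(r,s) = ⟨μ², σμν, τ⟩` acting on `X⁺`. -/
def HPlusGroup (hr : 2 ∣ r) (hr0 : r ≠ 0) (hs : 2 ∣ s) (hs0 : s ≠ 0) :
    Subgroup (Equiv.Perm (XPlus r s)) :=
  Subgroup.closure
    {muSqP r s hr hr0, sigmaMuNuP r s hr hr0 hs hs0, tauP r s hr hr0 hs hs0}

end plusPerms

/-! ### The standard double cover `Γ₂(r,s)` -/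

/-- Adjacency of the double cover: `(i,j)_δ ~ (i ± 1, j ± 1)_{δ+1}`. -/
def gamma2Rel (r s : ℕ) (x y : (ZMod r × ZMod s) × ZMod 2) : Prop :=
  (y.1.1 = x.1.1 + 1 ∨ y.1.1 = x.1.1 - 1) ∧ (y.1.2 = x.1.2 + 1 ∨ y.1.2 = x.1.2 - 1) ∧
    y.2 = x.2 + 1

/-- `Γ₂(r,s)`, the standard double cover of `Γ(r,s)`. -/
def Gamma2 (r s : ℕ) : SimpleGraph ((ZMod r × ZMod s) × ZMod 2) :=
  SimpleGraph.fromRel (gamma2Rel r s)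

/-- `μ : (i,j)_δ ↦ (i+1, j)_δ` on the double cover. -/
def muD (r s : ℕ) : Equiv.Perm ((ZMod r × ZMod s) × ZMod 2) :=
  (mu r s).prodCongr (Equiv.refl (ZMod 2))

/-- `ν : (i,j)_δ ↦ (i, j+1)_δ` on the double cover. -/
def nuD (r s : ℕ) : Equiv.Perm ((ZMod r × ZMod s) × ZMod 2) :=
  (nu r s).prodCongr (Equiv.refl (ZMod 2))

/-- `σ : (i,j)_δ ↦ (i, -j)_{δ+1}` on the double cover. -/
def sigmaD (r s : ℕ) : Equiv.Perm ((ZMod r × ZMod s) × ZMod 2) :=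
  ((Equiv.refl (ZMod r)).prodCongr (Equiv.neg (ZMod s))).prodCongr
    (Equiv.addRight (1 : ZMod 2))

/-- `τ : (i,j)_δ ↦ (-i, -j)_δ` on the double cover. -/
def tauD (r s : ℕ) : Equiv.Perm ((ZMod r × ZMod s) × ZMod 2) :=
  (tau r s).prodCongr (Equiv.refl (ZMod 2))

/-- `G₂(r,s) = ⟨μ, ν, σ, τ⟩` on the double cover. -/
def G2group (r s : ℕ) : Subgroup (Equiv.Perm ((ZMod r × ZMod s) × ZMod 2)) :=
  Subgroup.closure {muD r s, nuD r s, sigmaD r s, tauD r s}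




/-! ### Auxiliary infrastructure for stmt7 -/

section Aux

open Equiv Function

variable {r s : ℕ}

/-- sign action -/
def Sg {n : ℕ} (u : Bool) (i : ZMod n) : ZMod n := if u then -i else i

@[simp] lemma Sg_false {n : ℕ} (i : ZMod n) : Sg false i = i := rfl
@[simp] lemma Sg_true {n : ℕ} (i : ZMod n) : Sg true i = -i := rfl

lemma Sg_add {n : ℕ} (u : Bool) (x y : ZMod n) : Sg u (x + y) = Sg u x + Sg u y := by
  cases u <;> simp [Sg] <;> ring

lemma Sg_Sg {n : ℕ} (u v : Bool) (x : ZMod n) : Sg u (Sg v x) = Sg (xor v u) x := by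
  cases u <;> cases v <;> simp [Sg]

/-- translation in first coordinate -/
def tP (r s : ℕ) (a : ZMod r) : Equiv.Perm (ZMod r × ZMod s) :=
  (Equiv.addRight a).prodCongr (Equiv.refl _)

/-- translation in second coordinate -/
def uP (r s : ℕ) (b : ZMod s) : Equiv.Perm (ZMod r × ZMod s) :=
  (Equiv.refl _).prodCongr (Equiv.addRight b)

@[simp] lemma tP_apply (a : ZMod r) (p : ZMod r × ZMod s) : tP r s a p = (p.1 + a, p.2) := rfl
@[simp] lemma uP_apply (b : ZMod s) (p : ZMod r × ZMod s) : uP r s b p = (p.1, p.2 + b) := rfl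

lemma tP_mul (a a' : ZMod r) : tP r s a * tP r s a' = tP r s (a + a') := by
  ext p <;> simp [Equiv.Perm.mul_apply] <;> ring

lemma uP_mul (b b' : ZMod s) : uP r s b * uP r s b' = uP r s (b + b') := by
  ext p <;> simp [Equiv.Perm.mul_apply] <;> ring

lemma tP_zero : tP r s 0 = 1 := by ext p <;> simp

lemma uP_zero : uP r s 0 = 1 := by ext p <;> simp

lemma tP_pow (a : ZMod r) (n : ℕ) : tP r s a ^ n = tP r s ((n : ZMod r) * a) := by
  induction n with
  | zero => simp [tP_zero]
  | succ n ih => rw [pow_succ, ih, tP_mul]; congr 1; push_cast; ring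

lemma uP_pow (b : ZMod s) (n : ℕ) : uP r s b ^ n = uP r s ((n : ZMod s) * b) := by
  induction n with
  | zero => simp [uP_zero]
  | succ n ih => rw [pow_succ, ih, uP_mul]; congr 1; push_cast; ring

lemma tP_inv (a : ZMod r) : (tP r s a)⁻¹ = tP r s (-a) := by
  apply inv_eq_of_mul_eq_one_right
  rw [tP_mul, add_neg_cancel, tP_zero]

lemma uP_inv (b : ZMod s) : (uP r s b)⁻¹ = uP r s (-b) := by
  apply inv_eq_of_mul_eq_one_right
  rw [uP_mul, add_neg_cancel, uP_zero]

lemma uP_zpow (b : ZMod s) (n : ℤ) : uP r s b ^ n = uP r s ((n : ZMod s) * b) := by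
  cases n with
  | ofNat n => rw [Int.ofNat_eq_coe, zpow_natCast, uP_pow]; norm_cast
  | negSucc n =>
      rw [zpow_negSucc, uP_pow, uP_inv]
      congr 1
      push_cast
      ring

lemma mu_eq_tP : mu r s = tP r s 1 := rfl

lemma nuSq_eq_uP : nuSq r s = uP r s 2 := rfl

/-- the canonical affine form of elements of `H(r,s)` -/
def HForm (r s : ℕ) (g : Equiv.Perm (ZMod r × ZMod s)) : Prop :=
  ∃ (u v : Bool) (a : ZMod r) (b : ZMod s),
    ((u = v) ↔ b.val % 2 = 0) ∧ ∀ p : ZMod r × ZMod s, g p = (Sg u p.1 + a, Sg v p.2 + b)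

section sHyp

variable (hs2 : 2 ∣ s) (hs0 : s ≠ 0) (hs1 : 1 < s)

include hs2 hs0 in
lemma val_add_mod_two' (x y : ZMod s) : (x + y).val % 2 = (x.val + y.val) % 2 := by
  haveI : NeZero s := ⟨hs0⟩
  rw [ZMod.val_add, Nat.mod_mod_of_dvd _ hs2]

include hs2 hs0 in
lemma hform_mul {g₁ g₂ : Equiv.Perm (ZMod r × ZMod s)} (h₁ : HForm r s g₁)
    (h₂ : HForm r s g₂) : HForm r s (g₂ * g₁) := by
  obtain ⟨u₁, v₁, a₁, b₁, hc₁, hg₁⟩ := h₁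
  obtain ⟨u₂, v₂, a₂, b₂, hc₂, hg₂⟩ := h₂
  refine ⟨xor u₁ u₂, xor v₁ v₂, Sg u₂ a₁ + a₂, Sg v₂ b₁ + b₂, ?_, ?_⟩
  · have hb : (Sg v₂ b₁ + b₂).val % 2 = (b₁.val % 2 + b₂.val % 2) % 2 := by
      rw [val_add_mod_two' hs2 hs0]
      cases v₂
      · simp [Nat.add_mod]
      · have := val_neg_mod_two s hs2 hs0 b₁
        simp only [Sg_true]
        omega
    rw [hb]
    have m₁ : b₁.val % 2 = 0 ∨ b₁.val % 2 = 1 := Nat.mod_two_eq_zero_or_one _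
    have m₂ : b₂.val % 2 = 0 ∨ b₂.val % 2 = 1 := Nat.mod_two_eq_zero_or_one _
    cases u₁ <;> cases u₂ <;> cases v₁ <;> cases v₂ <;> simp_all <;> omega
  · intro p
    rw [Equiv.Perm.mul_apply, hg₁, hg₂]
    simp only [Sg_add, Sg_Sg, Prod.mk.injEq]
    exact ⟨by ring, by ring⟩

include hs2 hs0 in
lemma hform_inv {g : Equiv.Perm (ZMod r × ZMod s)} (h : HForm r s g) : HForm r s g⁻¹ := by
  obtain ⟨u, v, a, b, hc, hg⟩ := h
  refine ⟨u, v, -Sg u a, -Sg v b, ?_, ?_⟩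
  · have : (-Sg v b).val % 2 = b.val % 2 := by
      cases v
      · simp only [Sg_false]; exact val_neg_mod_two s hs2 hs0 b
      · simp only [Sg_true, neg_neg]
    rw [this]; exact hc
  · intro p
    have key : g (Sg u p.1 + -Sg u a, Sg v p.2 + -Sg v b) = p := by
      rw [hg]
      simp only [Sg_add, Sg_Sg]
      cases u <;> cases v <;> simp [Sg] <;> constructor <;> ring
    calc g⁻¹ p = g⁻¹ (g (Sg u p.1 + -Sg u a, Sg v p.2 + -Sg v b)) := by rw [key]
    _ = _ := by rw [← Equiv.Perm.mul_apply, inv_mul_cancel, Equiv.Perm.one_apply]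

lemma hform_one : HForm r s 1 := by
  refine ⟨false, false, 0, 0, by simp, fun p => by simp⟩

include hs2 hs0 hs1 in
lemma hform_H : ∀ g ∈ Hgroup r s, HForm r s g := by
  haveI : NeZero s := ⟨hs0⟩
  haveI : Fact (1 < s) := ⟨hs1⟩
  intro g hg
  refine Subgroup.closure_induction ?_ hform_one
    (fun x y _ _ hx hy => hform_mul hs2 hs0 hy hx)
    (fun x _ hx => hform_inv hs2 hs0 hx) hg
  rintro x (rfl | rfl | rfl)
  · exact ⟨false, false, 1, 0, by simp, fun p => by simp [mu, Sg, Prod.map]⟩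
  · exact ⟨true, false, 0, 1, by simp [ZMod.val_one], fun p => by simp [sigmaNu, Sg, Prod.map]⟩
  · exact ⟨true, true, 0, 0, by simp, fun p => by simp [tau, Sg, Prod.map]⟩

end sHyp


section Quot

variable {L : Subgroup (Equiv.Perm V)}

lemma mk_eq_iff (L : Subgroup (Equiv.Perm V)) (x y : V) :
    Quotient.mk (orbitSetoid L) x = Quotient.mk (orbitSetoid L) y ↔ ∃ g ∈ L, g y = x := by
  rw [show (Quotient.mk (orbitSetoid L) x = Quotient.mk (orbitSetoid L) y) ↔
      (orbitSetoid L).r x y from Quotient.eq]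
  constructor
  · rintro ⟨⟨g, hg⟩, rfl⟩
    exact ⟨g, hg, rfl⟩
  · rintro ⟨g, hg, rfl⟩
    exact ⟨⟨g, hg⟩, rfl⟩

lemma lift_bijective {A : Type*} (f : V → A)
    (hfib : ∀ x y, Quotient.mk (orbitSetoid L) x = Quotient.mk (orbitSetoid L) y ↔ f x = f y)
    (hsurj : Function.Surjective f) :
    Function.Bijective (Quotient.lift f (fun a b hab => (hfib a b).1 (Quotient.sound hab))) := by
  constructor
  · intro a b
    induction a using Quotient.ind
    induction b using Quotient.ind
    exact fun h => (hfib _ _).2 h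
  · intro a
    obtain ⟨x, rfl⟩ := hsurj a
    exact ⟨Quotient.mk _ x, rfl⟩

/-- quotient identified via a fibration -/
noncomputable def quotEquiv {A : Type*} (f : V → A)
    (hfib : ∀ x y, Quotient.mk (orbitSetoid L) x = Quotient.mk (orbitSetoid L) y ↔ f x = f y)
    (hsurj : Function.Surjective f) : Quotient (orbitSetoid L) ≃ A :=
  Equiv.ofBijective _ (lift_bijective f hfib hsurj)

lemma card_quot {A : Type*} (f : V → A)
    (hfib : ∀ x y, Quotient.mk (orbitSetoid L) x = Quotient.mk (orbitSetoid L) y ↔ f x = f y)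
    (hsurj : Function.Surjective f) :
    Nat.card (Quotient (orbitSetoid L)) = Nat.card A :=
  Nat.card_congr (quotEquiv f hfib hsurj)

lemma card_quot_one
    (hall : ∀ x y : V, Quotient.mk (orbitSetoid L) x = Quotient.mk (orbitSetoid L) y)
    [Nonempty V] :
    Nat.card (Quotient (orbitSetoid L)) ≤ 1 := by
  have : Subsingleton (Quotient (orbitSetoid L)) := by
    constructor
    intro a b
    induction a using Quotient.ind
    induction b using Quotient.ind
    exact hall _ _
  have h1 : Nat.card (Quotient (orbitSetoid L)) = 1 :=
    Nat.card_eq_one_iff_unique.mpr ⟨this, ⟨Quotient.mk _ (Classical.arbitrary V)⟩⟩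
  omega

lemma quot_adj (Γ : SimpleGraph V) (L : Subgroup (Equiv.Perm V))
    (a b : Quotient (orbitSetoid L)) :
    (quotientGraph Γ L).Adj a b ↔ a ≠ b ∧
      ((∃ x y : V, Quotient.mk (orbitSetoid L) x = a ∧ Quotient.mk (orbitSetoid L) y = b ∧
        Γ.Adj x y) ∨
       (∃ x y : V, Quotient.mk (orbitSetoid L) x = b ∧ Quotient.mk (orbitSetoid L) y = a ∧
        Γ.Adj x y)) :=
  SimpleGraph.fromRel_adj _ _ _

/-- main cycle-recognition lemma -/
lemma isoCycle_quot (Γ : SimpleGraph V) (L : Subgroup (Equiv.Perm V)) {m : ℕ} (hm : 3 ≤ m)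
    (f : V → ZMod m)
    (hfib : ∀ x y, Quotient.mk (orbitSetoid L) x = Quotient.mk (orbitSetoid L) y ↔ f x = f y)
    (hsurj : Function.Surjective f)
    (hadj : ∀ x y, Γ.Adj x y → f y = f x + 1 ∨ f y = f x - 1)
    (hnext : ∀ x, ∃ y, Γ.Adj x y ∧ f y = f x + 1) :
    Nonempty (quotientGraph Γ L ≃g SimpleGraph.cycleGraph m) := by
  obtain ⟨k, rfl⟩ : ∃ k, m = k + 1 := ⟨m - 1, by omega⟩
  haveI : Fact (1 < k + 1) := ⟨by omega⟩
  have hone : (1 : ZMod (k+1)) ≠ 0 := by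
    intro hh
    have := congrArg ZMod.val hh
    rw [ZMod.val_one, ZMod.val_zero] at this
    omega
  set F : Quotient (orbitSetoid L) → ZMod (k+1) :=
    Quotient.lift f (fun a b hab => (hfib a b).1 (Quotient.sound hab)) with hF
  have hFmk : ∀ x, F (Quotient.mk _ x) = f x := fun x => rfl
  have hFinj : ∀ a b, F a = F b → a = b := by
    intro a b
    induction a using Quotient.ind
    induction b using Quotient.ind
    exact fun h => (hfib _ _).2 h
  refine ⟨⟨(quotEquiv f hfib hsurj : Quotient (orbitSetoid L) ≃ Fin (k+1)), ?_⟩⟩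
  intro a b
  rw [SimpleGraph.cycleGraph_adj']
  show ((F a - F b : ZMod (k+1)).val = 1 ∨ (F b - F a : ZMod (k+1)).val = 1) ↔ _
  have hval : ∀ c d : ZMod (k+1), (c - d).val = 1 ↔ c = d + 1 := by
    intro c d
    constructor
    · intro hcd
      have : c - d = 1 := by
        have h1 : ((c - d).val : ZMod (k+1)) = c - d := by
          rw [ZMod.natCast_val, ZMod.cast_id]
        rw [hcd] at h1
        push_cast at h1
        rw [← h1]
      rw [← this]; ring
    · intro hcd
      rw [hcd, show d + 1 - d = 1 by ring, ZMod.val_one]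
  rw [quot_adj]
  constructor
  · rintro (h1 | h1)
    · -- F a = F b + 1
      rw [hval] at h1
      obtain ⟨x, rfl⟩ := Quotient.exists_rep b
      obtain ⟨y, hxy, hfy⟩ := hnext x
      have hya : Quotient.mk (orbitSetoid L) y = a := by
        apply hFinj
        rw [hFmk, hfy, h1, hFmk]
      refine ⟨?_, Or.inr ⟨x, y, rfl, hya, hxy⟩⟩
      intro hab
      rw [hab] at h1
      exact hone (by linear_combination -h1)
    · rw [hval] at h1
      obtain ⟨x, rfl⟩ := Quotient.exists_rep a
      obtain ⟨y, hxy, hfy⟩ := hnext x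
      have hyb : Quotient.mk (orbitSetoid L) y = b := by
        apply hFinj
        rw [hFmk, hfy, h1, hFmk]
      refine ⟨?_, Or.inl ⟨x, y, rfl, hyb, hxy⟩⟩
      intro hab
      rw [hab] at h1
      exact hone (by linear_combination -h1)
  · rintro ⟨hab, (⟨x, y, hx, hy, hxy⟩ | ⟨x, y, hx, hy, hxy⟩)⟩
    · rcases hadj x y hxy with h | h
      · right
        rw [hval, ← hx, ← hy, hFmk, hFmk, h]
      · left
        rw [hval, ← hx, ← hy, hFmk, hFmk, h]
        ring
    · rcases hadj x y hxy with h | h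
      · left
        rw [hval, ← hx, ← hy, hFmk, hFmk, h]
      · right
        rw [hval, ← hx, ← hy, hFmk, hFmk, h]
        ring

end Quot


section ZModSub

lemma addSubgroup_zmod (s : ℕ) (hs0 : s ≠ 0) (B : AddSubgroup (ZMod s)) :
    ∃ d : ℕ, 0 < d ∧ d ∣ s ∧ ∀ e : ZMod s, e ∈ B ↔ d ∣ e.val := by
  haveI : NeZero s := ⟨hs0⟩
  classical
  have hex : ∃ k, 0 < k ∧ ((k : ℕ) : ZMod s) ∈ B :=
    ⟨s, Nat.pos_of_ne_zero hs0, by rw [ZMod.natCast_self]; exact zero_mem B⟩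
  set d := Nat.find hex with hd
  obtain ⟨hd0, hdB⟩ := Nat.find_spec hex
  have hdvd : ∀ n : ℕ, ((n : ℕ) : ZMod s) ∈ B → d ∣ n := by
    intro n hn
    rcases Nat.eq_zero_or_pos (n % d) with hm | hm
    · exact Nat.dvd_of_mod_eq_zero hm
    · exfalso
      have hmem : (((n % d : ℕ)) : ZMod s) ∈ B := by
        have hsplit : ((n : ℕ) : ZMod s) =
            (n / d) • ((d : ℕ) : ZMod s) + ((n % d : ℕ) : ZMod s) := by
          rw [nsmul_eq_mul]
          have : (d : ℕ) * (n / d) + n % d = n := Nat.div_add_mod n d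
          calc ((n : ℕ) : ZMod s) = (((d * (n / d) + n % d : ℕ)) : ZMod s) := by rw [this]
          _ = _ := by push_cast; ring
        have : ((n % d : ℕ) : ZMod s) = ((n : ℕ) : ZMod s) - (n / d) • ((d : ℕ) : ZMod s) := by
          rw [hsplit]; ring
        rw [this]
        exact sub_mem hn (AddSubgroup.nsmul_mem B hdB _)
      exact Nat.find_min hex (Nat.mod_lt n hd0) ⟨hm, hmem⟩
  have hds : d ∣ s := hdvd s (by rw [ZMod.natCast_self]; exact zero_mem B)
  refine ⟨d, hd0, hds, fun e => ⟨fun he => ?_, fun he => ?_⟩⟩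
  · have : ((e.val : ℕ) : ZMod s) ∈ B := by
      rw [ZMod.natCast_val, ZMod.cast_id]
      exact he
    exact hdvd e.val this
  · obtain ⟨k, hk⟩ := he
    have : e = k • ((d : ℕ) : ZMod s) := by
      rw [nsmul_eq_mul]
      have : e = ((e.val : ℕ) : ZMod s) := by rw [ZMod.natCast_val, ZMod.cast_id]
      rw [this, hk]
      push_cast
      ring
    rw [this]
    exact AddSubgroup.nsmul_mem B hdB _

end ZModSub

section GammaAdj

variable {r s : ℕ}

lemma gamma_fst {x y : ZMod r × ZMod s} (h : (Gamma r s).Adj x y) :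
    y.1 = x.1 + 1 ∨ y.1 = x.1 - 1 := by
  rw [Gamma, SimpleGraph.fromRel_adj] at h
  rcases h.2 with ⟨h1, _⟩ | ⟨h1, _⟩
  · exact h1
  · rcases h1 with h1 | h1
    · right; rw [h1]; ring
    · left; rw [h1]; ring

lemma gamma_snd {x y : ZMod r × ZMod s} (h : (Gamma r s).Adj x y) :
    y.2 = x.2 + 1 ∨ y.2 = x.2 - 1 := by
  rw [Gamma, SimpleGraph.fromRel_adj] at h
  rcases h.2 with ⟨_, h1⟩ | ⟨_, h1⟩
  · exact h1
  · rcases h1 with h1 | h1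
    · right; rw [h1]; ring
    · left; rw [h1]; ring

lemma gamma_next (hr1 : (1 : ZMod r) ≠ 0) (x : ZMod r × ZMod s) :
    (Gamma r s).Adj x (x.1 + 1, x.2 + 1) := by
  rw [Gamma, SimpleGraph.fromRel_adj]
  refine ⟨fun hc => ?_, Or.inl ⟨Or.inl rfl, Or.inl rfl⟩⟩
  have := congrArg Prod.fst hc
  simp only at this
  exact hr1 (by linear_combination -this)

end GammaAdj

section MuExtract

variable {r s : ℕ}

lemma mu_mem_H : mu r s ∈ Hgroup r s := Subgroup.subset_closure (by simp)

lemma sigmaNu_mem_H : sigmaNu r s ∈ Hgroup r s := Subgroup.subset_closure (by simp)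

lemma tau_mem_H : tau r s ∈ Hgroup r s := Subgroup.subset_closure (by simp)

lemma sigmaNu_apply (p : ZMod r × ZMod s) : sigmaNu r s p = (-p.1, p.2 + 1) := rfl

lemma mu_apply' (p : ZMod r × ZMod s) : mu r s p = (p.1 + 1, p.2) := rfl

lemma inv_apply_form {g : Equiv.Perm (ZMod r × ZMod s)} {u v : Bool} {a : ZMod r} {b : ZMod s}
    (hg : ∀ p, g p = (Sg u p.1 + a, Sg v p.2 + b)) :
    ∀ p, g⁻¹ p = (Sg u (p.1 - a), Sg v (p.2 - b)) := by
  intro p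
  have key : g (Sg u (p.1 - a), Sg v (p.2 - b)) = p := by
    rw [hg]
    simp only [Sg_Sg, Bool.xor_self, Sg_false]
    simp [Prod.ext_iff]
  calc g⁻¹ p = g⁻¹ (g (Sg u (p.1 - a), Sg v (p.2 - b))) := by rw [key]
  _ = _ := by rw [← Equiv.Perm.mul_apply, inv_mul_cancel, Equiv.Perm.one_apply]

lemma two_ne_zero' (hr3 : 3 ≤ r) : (2 : ZMod r) ≠ 0 := by
  intro h
  have : ((2 : ℕ) : ZMod r) = 0 := by push_cast; exact h
  rw [ZMod.natCast_eq_zero_iff] at this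
  have := Nat.le_of_dvd (by norm_num) this
  omega

lemma one_ne_zero' (hr3 : 3 ≤ r) : (1 : ZMod r) ≠ 0 := by
  intro h
  have : ((1 : ℕ) : ZMod r) = 0 := by push_cast; exact h
  rw [ZMod.natCast_eq_zero_iff] at this
  have := Nat.le_of_dvd (by norm_num) this
  omega

lemma mu_of_tP [Fact (r.Prime)] {L : Subgroup (Equiv.Perm (ZMod r × ZMod s))} {c : ZMod r}
    (hc : c ≠ 0) (h : tP r s c ∈ L) : mu r s ∈ L := by
  have h2 : tP r s c ^ (c⁻¹.val) ∈ L := pow_mem h _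
  rw [tP_pow] at h2
  rw [mu_eq_tP]
  have : ((c⁻¹.val : ℕ) : ZMod r) * c = 1 := by
    rw [ZMod.natCast_val, ZMod.cast_id, inv_mul_cancel₀ hc]
  rwa [this] at h2

lemma tP_mem_of_mu [NeZero r] {L : Subgroup (Equiv.Perm (ZMod r × ZMod s))} (hmu : mu r s ∈ L)
    (d : ZMod r) : tP r s d ∈ L := by
  have h2 := pow_mem hmu d.val
  rw [mu_eq_tP, tP_pow, mul_one, ZMod.natCast_val, ZMod.cast_id] at h2
  exact h2

lemma getMu (hr3 : 3 ≤ r) [Fact (r.Prime)] {L : Subgroup (Equiv.Perm (ZMod r × ZMod s))}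
    (NL : NormalIn L (Hgroup r s)) {g : Equiv.Perm (ZMod r × ZMod s)} (hgL : g ∈ L)
    {u v : Bool} {a : ZMod r} {b : ZMod s}
    (hg : ∀ p, g p = (Sg u p.1 + a, Sg v p.2 + b))
    (hua : u = true ∨ a ≠ 0) : mu r s ∈ L := by
  have h2ne : (2 : ZMod r) ≠ 0 := two_ne_zero' hr3
  by_cases hu : u = true
  · subst hu
    have hmem : mu r s * g⁻¹ * (mu r s)⁻¹ ∈ L := NL.2 _ mu_mem_H _ (inv_mem hgL)
    have hw : g * (mu r s * g⁻¹ * (mu r s)⁻¹) = tP r s (-2) := by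
      apply Equiv.ext
      intro p
      have hinv := inv_apply_form hg
      simp only [Equiv.Perm.mul_apply, mu_eq_tP, tP_inv, tP_apply, hinv, hg,
        Sg_Sg, Bool.xor_self, Sg_false, Sg_true, Prod.ext_iff]
      exact ⟨by ring, by ring⟩
    have : tP r s (-2) ∈ L := by rw [← hw]; exact mul_mem hgL hmem
    exact mu_of_tP (neg_ne_zero.mpr h2ne) this
  · have hu' : u = false := by simpa using hu
    subst hu'
    have ha : a ≠ 0 := by
      rcases hua with h | h
      · simp at h
      · exact h
    have haa : a + a ≠ 0 := by
      intro h
      apply ha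
      have h2a : (2 : ZMod r) * a = 0 := by linear_combination h
      rcases mul_eq_zero.mp h2a with h' | h'
      · exact absurd h' h2ne
      · exact h'
    by_cases hv : v = true
    · subst hv
      have hw : g * g = tP r s (a + a) := by
        apply Equiv.ext
        intro p
        simp only [Equiv.Perm.mul_apply, hg, tP_apply, Sg_false, Sg_true, Prod.ext_iff]
        exact ⟨by ring, by ring⟩
      exact mu_of_tP haa (by rw [← hw]; exact mul_mem hgL hgL)
    · have hv' : v = false := by simpa using hv
      subst hv'
      have hsnF : ∀ p : ZMod r × ZMod s, sigmaNu r s p = (Sg true p.1 + 0, Sg false p.2 + 1) := by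
        intro p; simp [sigmaNu_apply, Sg]
      have hmemc : sigmaNu r s * g * (sigmaNu r s)⁻¹ ∈ L := NL.2 _ sigmaNu_mem_H _ hgL
      have hc : ∀ p : ZMod r × ZMod s,
          (sigmaNu r s * g * (sigmaNu r s)⁻¹) p = (Sg false p.1 + -a, Sg false p.2 + b) := by
        intro p
        have hinv := inv_apply_form hsnF
        simp only [Equiv.Perm.mul_apply, hinv, hg, hsnF, Sg_true, Sg_false, Prod.ext_iff]
        exact ⟨by ring, by ring⟩
      have hinvc := inv_apply_form hc
      have hw : g * (sigmaNu r s * g * (sigmaNu r s)⁻¹)⁻¹ = tP r s (a + a) := by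
        apply Equiv.ext
        intro p
        simp only [Equiv.Perm.mul_apply, hinvc, hg, tP_apply, Sg_false, Prod.ext_iff]
        exact ⟨by ring, by ring⟩
      exact mu_of_tP haa (by rw [← hw]; exact mul_mem hgL (inv_mem hmemc))

end MuExtract


section CycleInst

variable {r s : ℕ}

lemma castHom_eq_iff {d : ℕ} (hd0 : 0 < d) (hds : d ∣ s) (hs0 : s ≠ 0) (e₁ e₂ : ZMod s) :
    ZMod.castHom hds (ZMod d) e₁ = ZMod.castHom hds (ZMod d) e₂ ↔ d ∣ (e₂ - e₁).val := by
  haveI : NeZero s := ⟨hs0⟩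
  haveI : NeZero d := ⟨by omega⟩
  rw [eq_comm, ← sub_eq_zero, ← map_sub]
  rw [ZMod.castHom_apply, ← ZMod.natCast_val, ZMod.natCast_eq_zero_iff]

lemma castHom_snd_surj {d : ℕ} (hd0 : 0 < d) (hds : d ∣ s) (hs0 : s ≠ 0) :
    Function.Surjective
      (fun x : ZMod r × ZMod s => ZMod.castHom hds (ZMod d) x.2) := by
  haveI : NeZero s := ⟨hs0⟩
  haveI : NeZero d := ⟨by omega⟩
  intro c
  refine ⟨(0, ((c.val : ℕ) : ZMod s)), ?_⟩
  show ZMod.castHom hds (ZMod d) ((c.val : ℕ) : ZMod s) = c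
  rw [map_natCast]
  exact ZMod.natCast_rightInverse c

/-- quotient is a `d`-cycle when orbits are fibers of reduction of the second coordinate -/
lemma iso_cycle_snd_mod (L : Subgroup (Equiv.Perm (ZMod r × ZMod s))) {d : ℕ}
    (hd3 : 3 ≤ d) (hds : d ∣ s) (hs0 : s ≠ 0) (hr3 : 3 ≤ r)
    (hfib : ∀ x y : ZMod r × ZMod s,
      Quotient.mk (orbitSetoid L) x = Quotient.mk (orbitSetoid L) y ↔
        ZMod.castHom hds (ZMod d) x.2 = ZMod.castHom hds (ZMod d) y.2) :
    Nonempty (quotientGraph (Gamma r s) L ≃g SimpleGraph.cycleGraph d) := by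
  apply isoCycle_quot (Gamma r s) L hd3 (fun x => ZMod.castHom hds (ZMod d) x.2) hfib
    (castHom_snd_surj (by omega) hds hs0)
  · intro x y h
    rcases gamma_snd h with h1 | h1
    · left; rw [h1, map_add, map_one]
    · right; rw [h1, map_sub, map_one]
  · intro x
    exact ⟨(x.1 + 1, x.2 + 1), gamma_next (one_ne_zero' hr3) x, by rw [map_add, map_one]⟩

/-- quotient is an `r`-cycle when orbits are fibers of the first coordinate -/
lemma iso_cycle_fst (L : Subgroup (Equiv.Perm (ZMod r × ZMod s))) (hr3 : 3 ≤ r)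
    (hfib : ∀ x y : ZMod r × ZMod s,
      Quotient.mk (orbitSetoid L) x = Quotient.mk (orbitSetoid L) y ↔ x.1 = y.1) :
    Nonempty (quotientGraph (Gamma r s) L ≃g SimpleGraph.cycleGraph r) := by
  apply isoCycle_quot (Gamma r s) L hr3 (fun x => x.1) hfib (fun c => ⟨(c, 0), rfl⟩)
  · intro x y h
    exact gamma_fst h
  · intro x
    exact ⟨(x.1 + 1, x.2 + 1), gamma_next (one_ne_zero' hr3) x, rfl⟩

lemma par_cast_eq_iff (m n : ℕ) : ((m : ZMod 2) = (n : ZMod 2)) ↔ m % 2 = n % 2 := by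
  rw [ZMod.natCast_eq_natCast_iff]
  exact Iff.rfl

lemma par_flip (hs2 : 2 ∣ s) (hs0 : s ≠ 0) {x y : ZMod r × ZMod s}
    (h : (Gamma r s).Adj x y) :
    ((y.2.val : ℕ) : ZMod 2) = ((x.2.val : ℕ) : ZMod 2) + 1 := by
  rcases gamma_snd h with h1 | h1
  · have hv := val_add_one_mod_two s hs2 hs0 x.2
    rw [← h1] at hv
    have : ((y.2.val : ℕ) : ZMod 2) = (((x.2.val + 1 : ℕ)) : ZMod 2) := by
      rw [par_cast_eq_iff, hv, Nat.add_mod]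
    rw [this]
    push_cast
    ring
  · have h1' : x.2 = y.2 + 1 := by rw [h1]; ring
    have hv := val_add_one_mod_two s hs2 hs0 y.2
    rw [← h1'] at hv
    have hx : ((x.2.val : ℕ) : ZMod 2) = ((y.2.val : ℕ) : ZMod 2) + 1 := by
      have : ((x.2.val : ℕ) : ZMod 2) = (((y.2.val + 1 : ℕ)) : ZMod 2) := by
        rw [par_cast_eq_iff, hv, Nat.add_mod]
      rw [this]
      push_cast
      ring
    rw [hx]
    have : ((1 : ZMod 2) + 1) = 0 := by decide
    linear_combination -this

/-- quotient is a `2r`-cycle when orbits are fibers of (first coordinate, parity) -/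
lemma iso_cycle_two_r (L : Subgroup (Equiv.Perm (ZMod r × ZMod s))) (hr3 : 3 ≤ r)
    (hrodd : Odd r) (hs2 : 2 ∣ s) (hs0 : s ≠ 0) (hs1 : 1 < s)
    (hfib : ∀ x y : ZMod r × ZMod s,
      Quotient.mk (orbitSetoid L) x = Quotient.mk (orbitSetoid L) y ↔
        (x.1 = y.1 ∧ x.2.val % 2 = y.2.val % 2)) :
    Nonempty (quotientGraph (Gamma r s) L ≃g SimpleGraph.cycleGraph (2 * r)) := by
  haveI : NeZero s := ⟨hs0⟩
  haveI : Fact (1 < s) := ⟨hs1⟩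
  have cop : Nat.Coprime 2 r := Nat.coprime_two_left.mpr hrodd
  set χ := ZMod.chineseRemainder cop with hχ
  set f : ZMod r × ZMod s → ZMod (2 * r) :=
    fun x => χ.symm (((x.2.val : ℕ) : ZMod 2), x.1) with hf
  have hfeq : ∀ x y, f x = f y ↔
      (((x.2.val : ℕ) : ZMod 2) = ((y.2.val : ℕ) : ZMod 2) ∧ x.1 = y.1) := by
    intro x y
    rw [hf]
    constructor
    · intro h
      have := χ.symm.injective h
      exact ⟨congrArg Prod.fst this, congrArg Prod.snd this⟩
    · rintro ⟨h1, h2⟩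
      dsimp only
      rw [h1, h2]
  have hone : χ.symm (1, 1) = 1 := by
    have : ((1 : ZMod 2), (1 : ZMod r)) = (1 : ZMod 2 × ZMod r) := rfl
    rw [this, map_one]
  have hneg : χ.symm (1, -1) = -1 := by
    have : ((1 : ZMod 2), (-1 : ZMod r)) = (-(1 : ZMod 2 × ZMod r)) := by
      rw [show (1 : ZMod 2) = -1 from by decide]
      rfl
    rw [this, map_neg, map_one]
  apply isoCycle_quot (Gamma r s) L (by omega) f
  · intro x y
    rw [hfib, hfeq]
    rw [par_cast_eq_iff]
    tauto
  · intro z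
    set w := χ z with hw
    have h01 : ∀ c : ZMod 2, c = 0 ∨ c = 1 := by decide
    set j : ZMod s := if w.1 = 0 then 0 else 1 with hj
    refine ⟨(w.2, j), ?_⟩
    have hjp : ((j.val : ℕ) : ZMod 2) = w.1 := by
      rcases h01 w.1 with h | h
      · rw [hj, if_pos h, h, ZMod.val_zero]
        rfl
      · have hne : ¬ w.1 = 0 := by rw [h]; decide
        rw [hj, if_neg hne, h, ZMod.val_one]
        rfl
    show χ.symm (((j.val : ℕ) : ZMod 2), w.2) = z
    rw [hjp]
    have : (w.1, w.2) = w := rfl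
    rw [this, hw]
    exact χ.symm_apply_apply z
  · intro x y h
    have hp := par_flip hs2 hs0 h
    rcases gamma_fst h with h1 | h1
    · left
      show χ.symm (((y.2.val : ℕ) : ZMod 2), y.1) = χ.symm (((x.2.val : ℕ) : ZMod 2), x.1) + 1
      rw [hp, h1, ← hone, ← map_add]
      congr 1
    · right
      show χ.symm (((y.2.val : ℕ) : ZMod 2), y.1) = χ.symm (((x.2.val : ℕ) : ZMod 2), x.1) - 1
      rw [hp, h1]
      have hpair : (((x.2.val : ℕ) : ZMod 2) + 1, x.1 - 1)
          = ((((x.2.val : ℕ) : ZMod 2), x.1) + ((1 : ZMod 2), (-1 : ZMod r))) := by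
        rw [Prod.mk_add_mk]
        exact Prod.ext rfl (sub_eq_add_neg _ _)
      rw [hpair, map_add, hneg]
      ring
  · intro x
    refine ⟨(x.1 + 1, x.2 + 1), gamma_next (one_ne_zero' hr3) x, ?_⟩
    have hp := par_flip hs2 hs0 (gamma_next (one_ne_zero' hr3) x)
    show χ.symm ((((x.2 + 1).val : ℕ) : ZMod 2), x.1 + 1) =
      χ.symm (((x.2.val : ℕ) : ZMod 2), x.1) + 1
    rw [show (((x.2 + 1).val : ℕ) : ZMod 2) = ((x.2.val : ℕ) : ZMod 2) + 1 from hp,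
      ← hone, ← map_add]
    congr 1

end CycleInst

section Movers

variable {r s : ℕ}

lemma move_mu [NeZero r] {L : Subgroup (Equiv.Perm (ZMod r × ZMod s))} (hmu : mu r s ∈ L)
    {n : Equiv.Perm (ZMod r × ZMod s)} (hn : n ∈ L) (x y : ZMod r × ZMod s)
    (h2 : (n x).2 = y.2) : ∃ w ∈ L, w x = y := by
  refine ⟨tP r s (y.1 - (n x).1) * n, mul_mem (tP_mem_of_mu hmu _) hn, ?_⟩
  rw [Equiv.Perm.mul_apply, tP_apply]
  exact Prod.ext (by ring) h2

lemma shift_iter {L : Subgroup (Equiv.Perm (ZMod r × ZMod s))}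
    {h : Equiv.Perm (ZMod r × ZMod s)} (hh : h ∈ L) (hsh : ∀ p, (h p).2 = p.2 - 2) :
    ∀ k : ℕ, ∃ n ∈ L, ∀ p : ZMod r × ZMod s, (n p).2 = p.2 - 2 * (k : ZMod s) := by
  intro k
  induction k with
  | zero => exact ⟨1, one_mem L, fun p => by simp⟩
  | succ k ih =>
      obtain ⟨n, hn, hnp⟩ := ih
      refine ⟨h * n, mul_mem hh hn, fun p => ?_⟩
      rw [Equiv.Perm.mul_apply, hsh, hnp]
      push_cast
      ring

lemma even_reach (hs2 : 2 ∣ s) (hs0 : s ≠ 0) (e : ZMod s) (he : e.val % 2 = 0) :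
    ∃ k : ℕ, -(2 * (k : ZMod s)) = e := by
  haveI : NeZero s := ⟨hs0⟩
  have hlt : e.val < s := ZMod.val_lt e
  refine ⟨(s - e.val) / 2, ?_⟩
  have h2d : 2 ∣ (s - e.val) := by omega
  have hmul : 2 * ((s - e.val) / 2) = s - e.val := Nat.mul_div_cancel' h2d
  have h1 : (2 : ZMod s) * (((s - e.val) / 2 : ℕ) : ZMod s)
      = ((2 * ((s - e.val) / 2) : ℕ) : ZMod s) := by push_cast; ring
  rw [h1, hmul]
  have hadd : s - e.val + e.val = s := by omega
  have hsub : (((s - e.val) : ℕ) : ZMod s) = - ((e.val : ℕ) : ZMod s) := by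
    have h3 : (((s - e.val) : ℕ) : ZMod s) + ((e.val : ℕ) : ZMod s)
        = ((s : ℕ) : ZMod s) := by
      rw [← Nat.cast_add, hadd]
    rw [ZMod.natCast_self] at h3
    linear_combination h3
  rw [hsub, ZMod.natCast_val, ZMod.cast_id]
  ring

lemma sub_val_parity (hs2 : 2 ∣ s) (hs0 : s ≠ 0) (x y : ZMod s)
    (h : x.val % 2 = y.val % 2) : (y - x).val % 2 = 0 := by
  have h1 : (y - x).val % 2 = (y.val + (-x).val) % 2 := by
    rw [sub_eq_add_neg, val_add_mod_two' hs2 hs0]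
  have h2 := val_neg_mod_two s hs2 hs0 x
  omega

lemma exists_mul_eq_two (hsOpt : s = 4 ∨ ∃ q : ℕ, q.Prime ∧ Odd q ∧ s = 2 * q)
    (hs0 : s ≠ 0) (b : ZMod s) (hb0 : b ≠ 0) (hbe : b.val % 2 = 0) :
    ∃ k : ℕ, (k : ZMod s) * b = 2 := by
  haveI : NeZero s := ⟨hs0⟩
  set v := b.val with hv
  have hv0 : 0 < v := by
    rcases Nat.eq_zero_or_pos v with h | h
    · exact absurd ((ZMod.val_eq_zero b).mp h) hb0
    · exact h
  have hvs : v < s := ZMod.val_lt b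
  have hgcd : Nat.gcd v s = 2 := by
    rcases hsOpt with rfl | ⟨q, hq, hqodd, rfl⟩
    · have hv2 : b.val = 2 := by omega
      show Nat.gcd b.val 4 = 2
      rw [hv2]
      decide
    · obtain ⟨m, hm⟩ : 2 ∣ v := by omega
      rw [hm]
      have hm0 : 0 < m := by omega
      have hcop : Nat.gcd m q = 1 := by
        have : ¬ q ∣ m := by
          intro hdvd
          have := Nat.le_of_dvd hm0 hdvd
          omega
        have := (Nat.Prime.coprime_iff_not_dvd hq).mpr this
        exact Nat.Coprime.gcd_eq_one (Nat.coprime_comm.mp this)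
      rw [Nat.gcd_mul_left, hcop, mul_one]
  have hbez := Nat.gcd_eq_gcd_ab v s
  set α : ZMod s := ((Nat.gcdA v s : ℤ) : ZMod s) with hα
  have h2 : (2 : ZMod s) = b * α := by
    have hcast := congrArg (fun z : ℤ => ((z : ℤ) : ZMod s)) hbez
    push_cast at hcast
    rw [ZMod.natCast_self, hgcd] at hcast
    have hb : ((v : ℕ) : ZMod s) = b := by rw [hv, ZMod.natCast_val, ZMod.cast_id]
    rw [hb] at hcast
    push_cast at hcast
    rw [hcast]
    ring
  refine ⟨α.val, ?_⟩
  rw [ZMod.natCast_val, ZMod.cast_id, mul_comm, ← h2]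

end Movers


section Parts23

variable {r s : ℕ}

lemma part2lemma (hr3 : 3 ≤ r) (hs4 : 4 ≤ s) :
    Nonempty (quotientGraph (Gamma r s) (Subgroup.closure {mu r s}) ≃g
      SimpleGraph.cycleGraph s) := by
  have hs0 : s ≠ 0 := by omega
  haveI : NeZero r := ⟨by omega⟩
  haveI : NeZero s := ⟨hs0⟩
  set L := Subgroup.closure {mu r s} with hL
  have hmuL : mu r s ∈ L := Subgroup.subset_closure (Set.mem_singleton _)
  have hsnd : ∀ g ∈ L, ∀ p : ZMod r × ZMod s, (g p).2 = p.2 := by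
    intro g hg
    refine Subgroup.closure_induction ?_ (fun p => rfl) ?_ ?_ hg
    · intro x hx
      rw [Set.mem_singleton_iff] at hx
      subst hx
      intro p
      rfl
    · intro a b _ _ ha hb p
      rw [Equiv.Perm.mul_apply, ha, hb]
    · intro a _ ha p
      have := ha (a⁻¹ p)
      rw [← Equiv.Perm.mul_apply, mul_inv_cancel, Equiv.Perm.one_apply] at this
      exact this.symm
  have hfib : ∀ x y : ZMod r × ZMod s,
      Quotient.mk (orbitSetoid L) x = Quotient.mk (orbitSetoid L) y ↔ x.2 = y.2 := by
    intro x y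
    rw [mk_eq_iff]
    constructor
    · rintro ⟨w, hw, rfl⟩
      exact hsnd w hw y
    · intro h
      refine ⟨tP r s (x.1 - y.1), tP_mem_of_mu hmuL _, ?_⟩
      rw [tP_apply]
      exact Prod.ext (by ring) h.symm
  have hfib' : ∀ x y : ZMod r × ZMod s,
      Quotient.mk (orbitSetoid L) x = Quotient.mk (orbitSetoid L) y ↔
        ZMod.castHom (dvd_refl s) (ZMod s) x.2 = ZMod.castHom (dvd_refl s) (ZMod s) y.2 := by
    intro x y
    rw [hfib, castHom_eq_iff (by omega) (dvd_refl s) hs0]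
    constructor
    · intro h
      rw [h, sub_self, ZMod.val_zero]
      exact dvd_refl s |>.trans (dvd_zero s) |> fun _ => Dvd.intro 0 rfl
    · intro h
      have hlt : (y.2 - x.2).val < s := ZMod.val_lt _
      have : (y.2 - x.2).val = 0 := Nat.eq_zero_of_dvd_of_lt h hlt |> fun _ => by
        rcases Nat.eq_zero_of_dvd_of_lt h hlt with h'
        exact h'
      have h0 : y.2 - x.2 = 0 := (ZMod.val_eq_zero _).mp this
      linear_combination -h0
  exact iso_cycle_snd_mod L (by omega) (dvd_refl s) hs0 hr3 hfib'

lemma part3fib (hr3 : 3 ≤ r) (hs4 : 4 ≤ s) (hs2 : 2 ∣ s) :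
    ∀ x y : ZMod r × ZMod s,
      Quotient.mk (orbitSetoid (Subgroup.closure {nuSq r s})) x =
        Quotient.mk (orbitSetoid (Subgroup.closure {nuSq r s})) y ↔
        (x.1 = y.1 ∧ x.2.val % 2 = y.2.val % 2) := by
  have hs0 : s ≠ 0 := by omega
  haveI : NeZero s := ⟨hs0⟩
  set L := Subgroup.closure {nuSq r s} with hL
  have hinv : ∀ g ∈ L, ∀ p : ZMod r × ZMod s,
      (g p).1 = p.1 ∧ (g p).2.val % 2 = p.2.val % 2 := by
    intro g hg
    refine Subgroup.closure_induction ?_ (fun p => ⟨rfl, rfl⟩) ?_ ?_ hg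
    · intro x hx
      rw [Set.mem_singleton_iff] at hx
      subst hx
      intro p
      refine ⟨rfl, ?_⟩
      exact val_add_two_mod_two s hs2 hs0 p.2
    · intro a b _ _ ha hb p
      rw [Equiv.Perm.mul_apply]
      exact ⟨by rw [(ha (b p)).1, (hb p).1], by rw [(ha (b p)).2, (hb p).2]⟩
    · intro a _ ha p
      have := ha (a⁻¹ p)
      rw [← Equiv.Perm.mul_apply, mul_inv_cancel, Equiv.Perm.one_apply] at this
      exact ⟨this.1.symm, this.2.symm⟩
  intro x y
  rw [mk_eq_iff]
  constructor
  · rintro ⟨w, hw, rfl⟩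
    exact ⟨(hinv w hw y).1, (hinv w hw y).2⟩
  · rintro ⟨h1, h2⟩
    set e : ZMod s := x.2 - y.2 with he
    have hpe : e.val % 2 = 0 := sub_val_parity hs2 hs0 y.2 x.2 h2.symm
    have h2d : 2 ∣ e.val := by omega
    refine ⟨nuSq r s ^ (e.val / 2), pow_mem (Subgroup.subset_closure (Set.mem_singleton _)) _, ?_⟩
    rw [nuSq_eq_uP, uP_pow]
    have hval : ((e.val / 2 : ℕ) : ZMod s) * 2 = e := by
      have : ((e.val / 2 : ℕ) : ZMod s) * 2 = ((2 * (e.val / 2) : ℕ) : ZMod s) := by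
        push_cast; ring
      rw [this, Nat.mul_div_cancel' h2d, ZMod.natCast_val, ZMod.cast_id]
    rw [hval, uP_apply]
    exact Prod.ext h1.symm (by rw [he]; ring)

lemma part3lemma (hr3 : 3 ≤ r) (hrodd : Odd r) (hs4 : 4 ≤ s) (hs2 : 2 ∣ s) :
    Nonempty (quotientGraph (Gamma r s) (Subgroup.closure {nuSq r s}) ≃g
      SimpleGraph.cycleGraph (2 * r)) :=
  iso_cycle_two_r _ hr3 hrodd hs2 (by omega) (by omega) (part3fib hr3 hs4 hs2)

lemma nuSq_mem_H : nuSq r s ∈ Hgroup r s := by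
  have h : nuSq r s = sigmaNu r s * sigmaNu r s := by
    apply Equiv.ext
    intro p
    rw [Equiv.Perm.mul_apply, sigmaNu_apply, sigmaNu_apply, nuSq_eq_uP, uP_apply]
    exact Prod.ext (by dsimp; rw [neg_neg]) (by dsimp; ring)
  rw [h]
  exact mul_mem sigmaNu_mem_H sigmaNu_mem_H

lemma normalIn_nuSq (hs2 : 2 ∣ s) (hs0 : s ≠ 0) (hs1 : 1 < s) :
    NormalIn (Subgroup.closure {nuSq r s}) (Hgroup r s) := by
  constructor
  · exact (Subgroup.closure_le _).mpr (Set.singleton_subset_iff.mpr nuSq_mem_H)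
  · intro h hH n hn
    obtain ⟨u, v, a, b, hcnd, hp⟩ := hform_H hs2 hs0 hs1 h hH
    obtain ⟨m, rfl⟩ := Subgroup.mem_closure_singleton.mp hn
    have hconj : h * nuSq r s * h⁻¹ = uP r s (Sg v 2) := by
      have hcomm : h * nuSq r s = uP r s (Sg v 2) * h := by
        apply Equiv.ext
        intro p
        rw [Equiv.Perm.mul_apply, Equiv.Perm.mul_apply, nuSq_eq_uP, uP_apply, hp, uP_apply, hp]
        exact Prod.ext rfl (by dsimp; rw [Sg_add]; ring)
      rw [hcomm, mul_assoc, mul_inv_cancel, mul_one]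
    have hpow : h * nuSq r s ^ m * h⁻¹ = (h * nuSq r s * h⁻¹) ^ m := by
      have := map_zpow (MulAut.conj h) (nuSq r s) m
      simpa [MulAut.conj_apply] using this
    rw [hpow, hconj]
    cases v
    · have : uP r s (Sg false 2) = nuSq r s := by rw [Sg_false, nuSq_eq_uP]
      rw [this]
      exact zpow_mem (Subgroup.subset_closure (Set.mem_singleton _)) m
    · have : uP r s (Sg true 2) = (nuSq r s)⁻¹ := by rw [Sg_true, nuSq_eq_uP, uP_inv]
      rw [this]
      exact zpow_mem (inv_mem (Subgroup.subset_closure (Set.mem_singleton _))) m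

lemma closure_nuSq_ne_bot (hs4 : 4 ≤ s) :
    (Subgroup.closure {nuSq r s} : Subgroup (Equiv.Perm (ZMod r × ZMod s))) ≠ ⊥ := by
  intro h
  have hmem : nuSq r s ∈ Subgroup.closure {nuSq r s} :=
    Subgroup.subset_closure (Set.mem_singleton _)
  rw [h, Subgroup.mem_bot] at hmem
  have := congrArg (fun g : Equiv.Perm (ZMod r × ZMod s) => (g (0, 0)).2) hmem
  simp only [nuSq_eq_uP, uP_apply] at this
  have h2 : (2 : ZMod s) ≠ 0 := two_ne_zero' (r := s) (by omega)
  exact h2 (by rw [← zero_add (2 : ZMod s)]; exact this)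

end Parts23


section Part1

variable {r s : ℕ}

lemma part1lemma (hr : r.Prime) (hrodd : Odd r)
    (hsOpt : s = 4 ∨ ∃ q : ℕ, q.Prime ∧ Odd q ∧ s = 2 * q) :
    ∀ L : Subgroup (Equiv.Perm (ZMod r × ZMod s)), NormalIn L (Hgroup r s) → L ≠ ⊥ →
      Nat.card (Quotient (orbitSetoid L)) ≤ 2 ∨
        IsoCycle (quotientGraph (Gamma r s) L) := by
  have hr2 := hr.two_le
  have hrm : r % 2 = 1 := Nat.odd_iff.mp hrodd
  have hr3 : 3 ≤ r := by omega
  have hs4 : 4 ≤ s := by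
    rcases hsOpt with rfl | ⟨q, hq, hqodd, rfl⟩
    · omega
    · have h1 := hq.two_le
      have h2 := Nat.odd_iff.mp hqodd
      omega
  have hs2 : 2 ∣ s := by
    rcases hsOpt with rfl | ⟨q, _, _, rfl⟩
    · omega
    · exact Dvd.intro q rfl
  have hs0 : s ≠ 0 := by omega
  have hs1 : 1 < s := by omega
  haveI : Fact (r.Prime) := ⟨hr⟩
  haveI : NeZero r := ⟨by omega⟩
  haveI : NeZero s := ⟨hs0⟩
  haveI : Fact (1 < s) := ⟨hs1⟩
  intro L NL hLbot
  have hformL : ∀ g ∈ L, HForm r s g := fun g hg => hform_H hs2 hs0 hs1 g (NL.1 hg)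
  have hsnF : ∀ p : ZMod r × ZMod s,
      sigmaNu r s p = (Sg true p.1 + 0, Sg false p.2 + 1) := fun p => by
    rw [sigmaNu_apply]
    exact Prod.ext (by simp [Sg]) rfl
  by_cases hmu : mu r s ∈ L
  · -- Case I : μ ∈ L
    by_cases hrefl : ∃ g ∈ L, ∃ (u : Bool) (a : ZMod r) (b : ZMod s),
        ∀ p : ZMod r × ZMod s, g p = (Sg u p.1 + a, -p.2 + b)
    · -- Case I.2 : a reflection is present; at most 2 orbits
      left
      obtain ⟨g, hgL, u, a, b, hg⟩ := hrefl
      have hcL : sigmaNu r s * g * (sigmaNu r s)⁻¹ ∈ L := NL.2 _ sigmaNu_mem_H _ hgL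
      have hcsnd : ∀ p : ZMod r × ZMod s,
          ((sigmaNu r s) (g ((sigmaNu r s)⁻¹ p))).2 = -p.2 + b + 2 := by
        intro p
        rw [inv_apply_form hsnF, hg, sigmaNu_apply]
        dsimp
        ring
      have hshL : g * (sigmaNu r s * g * (sigmaNu r s)⁻¹) ∈ L := mul_mem hgL hcL
      have hshsnd : ∀ p : ZMod r × ZMod s,
          ((g * (sigmaNu r s * g * (sigmaNu r s)⁻¹)) p).2 = p.2 - 2 := by
        intro p
        show (g ((sigmaNu r s) (g ((sigmaNu r s)⁻¹ p)))).2 = p.2 - 2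
        rw [hg ((sigmaNu r s) (g ((sigmaNu r s)⁻¹ p)))]
        dsimp
        rw [show ((sigmaNu r s) (g ((Equiv.symm (sigmaNu r s)) p))).2 = -p.2 + b + 2 from hcsnd p]
        ring
      have heven : ∀ x y : ZMod r × ZMod s, x.2.val % 2 = y.2.val % 2 →
          ∃ w ∈ L, w x = y := by
        intro x y hpar
        obtain ⟨k, hk⟩ := even_reach hs2 hs0 (y.2 - x.2)
          (sub_val_parity hs2 hs0 x.2 y.2 hpar)
        obtain ⟨n, hnL, hn⟩ := shift_iter hshL hshsnd k
        apply move_mu hmu hnL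
        rw [hn x]
        linear_combination hk
      by_cases hodd : ∃ g' ∈ L, ∃ (u' v' : Bool) (a' : ZMod r) (b' : ZMod s),
          (∀ p : ZMod r × ZMod s, g' p = (Sg u' p.1 + a', Sg v' p.2 + b')) ∧
            b'.val % 2 = 1
      · -- some element with odd shift : single orbit
        obtain ⟨g', hg'L, u', v', a', b', hg', hb'odd⟩ := hodd
        have hmove : ∀ x y : ZMod r × ZMod s, ∃ w ∈ L, w x = y := by
          intro x y
          by_cases hpar : x.2.val % 2 = y.2.val % 2
          · exact heven x y hpar
          · have hg'par : (g' x).2.val % 2 = y.2.val % 2 := by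
              rw [hg' x]
              dsimp
              have h1 := val_add_mod_two' hs2 hs0 (Sg v' x.2) b'
              have h2 : (Sg v' x.2).val % 2 = x.2.val % 2 := by
                cases v'
                · rfl
                · exact val_neg_mod_two s hs2 hs0 x.2
              have hx2 := Nat.mod_two_eq_zero_or_one x.2.val
              have hy2 := Nat.mod_two_eq_zero_or_one y.2.val
              omega
            obtain ⟨w2, hw2L, hw2⟩ := heven (g' x) y hg'par
            exact ⟨w2 * g', mul_mem hw2L hg'L, by rw [Equiv.Perm.mul_apply, hw2]⟩
        have hall : ∀ x y : ZMod r × ZMod s,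
            Quotient.mk (orbitSetoid L) x = Quotient.mk (orbitSetoid L) y := by
          intro x y
          rw [mk_eq_iff]
          obtain ⟨w, hwL, hw⟩ := hmove y x
          exact ⟨w, hwL, hw⟩
        have := card_quot_one (L := L) hall
        omega
      · -- all shifts even : exactly the two parity classes
        push_neg at hodd
        have hfibP : ∀ x y : ZMod r × ZMod s,
            Quotient.mk (orbitSetoid L) x = Quotient.mk (orbitSetoid L) y ↔
              x.2.val % 2 = y.2.val % 2 := by
          intro x y
          rw [mk_eq_iff]
          constructor
          · rintro ⟨w, hwL, rfl⟩
            obtain ⟨u₀, v₀, a₀, b₀, hc₀, hw⟩ := hformL w hwL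
            have hbe : b₀.val % 2 ≠ 1 := hodd w hwL u₀ v₀ a₀ b₀ hw
            rw [hw y]
            dsimp
            have h1 := val_add_mod_two' hs2 hs0 (Sg v₀ y.2) b₀
            have h2 : (Sg v₀ y.2).val % 2 = y.2.val % 2 := by
              cases v₀
              · rfl
              · exact val_neg_mod_two s hs2 hs0 y.2
            have hx2 := Nat.mod_two_eq_zero_or_one y.2.val
            have hb2 := Nat.mod_two_eq_zero_or_one b₀.val
            omega
          · intro hpar
            obtain ⟨w, hwL, hw⟩ := heven y x hpar.symm
            exact ⟨w, hwL, hw⟩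
        have hsur : Function.Surjective
            (fun x : ZMod r × ZMod s => ((x.2.val : ℕ) : ZMod 2)) := by
          intro c
          have h01 : ∀ c : ZMod 2, c = 0 ∨ c = 1 := by decide
          rcases h01 c with rfl | rfl
          · exact ⟨(0, 0), by dsimp only; rw [ZMod.val_zero]; rfl⟩
          · exact ⟨(0, 1), by dsimp only; rw [ZMod.val_one]; rfl⟩
        have hfib2 : ∀ x y : ZMod r × ZMod s,
            Quotient.mk (orbitSetoid L) x = Quotient.mk (orbitSetoid L) y ↔
              ((x.2.val : ℕ) : ZMod 2) = ((y.2.val : ℕ) : ZMod 2) := by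
          intro x y
          rw [hfibP, par_cast_eq_iff]
        rw [card_quot _ hfib2 hsur, Nat.card_zmod]
    · -- Case I.1 : no reflection; orbits are unions of rows indexed by a subgroup of `ZMod s`
      push_neg at hrefl
      have hBadd : ∀ b₁ b₂ : ZMod s,
          (∃ g ∈ L, ∃ (u : Bool) (a : ZMod r),
            ∀ p : ZMod r × ZMod s, g p = (Sg u p.1 + a, p.2 + b₁)) →
          (∃ g ∈ L, ∃ (u : Bool) (a : ZMod r),
            ∀ p : ZMod r × ZMod s, g p = (Sg u p.1 + a, p.2 + b₂)) →
          (∃ g ∈ L, ∃ (u : Bool) (a : ZMod r),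
            ∀ p : ZMod r × ZMod s, g p = (Sg u p.1 + a, p.2 + (b₁ + b₂))) := by
        rintro b₁ b₂ ⟨g₁, hg₁L, u₁, a₁, hg₁⟩ ⟨g₂, hg₂L, u₂, a₂, hg₂⟩
        refine ⟨g₂ * g₁, mul_mem hg₂L hg₁L, xor u₁ u₂, Sg u₂ a₁ + a₂, fun p => ?_⟩
        rw [Equiv.Perm.mul_apply, hg₁, hg₂]
        refine Prod.ext ?_ (by dsimp; ring)
        dsimp
        rw [Sg_add, Sg_Sg]
        ring
      set Bcar : Set (ZMod s) := {b : ZMod s | ∃ g ∈ L, ∃ (u : Bool) (a : ZMod r),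
        ∀ p : ZMod r × ZMod s, g p = (Sg u p.1 + a, p.2 + b)} with hBcar
      set B : AddSubgroup (ZMod s) :=
        { carrier := Bcar
          zero_mem' := ⟨1, one_mem L, false, 0, fun p => by
            rw [Equiv.Perm.one_apply]
            exact Prod.ext (by simp [Sg]) (by simp)⟩
          add_mem' := by
            intro b₁ b₂ h₁ h₂
            exact hBadd b₁ b₂ h₁ h₂
          neg_mem' := by
            rintro b ⟨g, hgL, u, a, hg⟩
            have hg' : ∀ p : ZMod r × ZMod s, g p = (Sg u p.1 + a, Sg false p.2 + b) :=
              fun p => by rw [hg p]; rfl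
            refine ⟨g⁻¹, inv_mem hgL, u, -Sg u a, fun p => ?_⟩
            rw [inv_apply_form hg']
            refine Prod.ext ?_ (by dsimp [Sg]; ring)
            dsimp
            cases u <;> simp [Sg] <;> ring } with hB
      obtain ⟨d, hd0, hds, hBd⟩ := addSubgroup_zmod s hs0 B
      have hfibB : ∀ x y : ZMod r × ZMod s,
          Quotient.mk (orbitSetoid L) x = Quotient.mk (orbitSetoid L) y ↔
            ZMod.castHom hds (ZMod d) x.2 = ZMod.castHom hds (ZMod d) y.2 := by
        intro x y
        rw [mk_eq_iff, castHom_eq_iff hd0 hds hs0]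
        constructor
        · rintro ⟨w, hwL, rfl⟩
          obtain ⟨u₀, v₀, a₀, b₀, hc₀, hw⟩ := hformL w hwL
          have hv0 : v₀ = false := by
            cases v₀
            · rfl
            · exfalso
              obtain ⟨p, hp⟩ := hrefl w hwL u₀ a₀ b₀
              apply hp
              rw [hw p]
              rfl
          subst hv0
          have hb₀B : b₀ ∈ B := ⟨w, hwL, u₀, a₀, fun p => by rw [hw p]; rfl⟩
          have heq : y.2 - (w y).2 = -b₀ := by
            rw [hw y]
            dsimp [Sg]
            ring
          rw [heq]
          exact (hBd _).1 (neg_mem hb₀B)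
        · intro hdvd
          have heB : (x.2 - y.2) ∈ B := by
            apply (hBd _).2
            have h1 : x.2 - y.2 = -(y.2 - x.2) := by ring
            rw [h1]
            exact (hBd _).1 (neg_mem ((hBd _).2 hdvd)) |> fun _ => by
              have := (hBd (-(y.2 - x.2))).1 (neg_mem ((hBd _).2 hdvd))
              exact this
          obtain ⟨g₀, hg₀L, u₀, a₀, hg₀⟩ := heB
          apply move_mu hmu hg₀L
          rw [hg₀ y]
          dsimp
          ring
      by_cases hd3 : 3 ≤ d
      · right
        exact ⟨d, hd3, iso_cycle_snd_mod L hd3 hds hs0 hr3 hfibB⟩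
      · left
        rw [card_quot _ hfibB (castHom_snd_surj hd0 hds hs0), Nat.card_zmod]
        omega
  · -- Case II : μ ∉ L
    have hforms : ∀ g ∈ L, ∃ (v : Bool) (b : ZMod s), ((false = v) ↔ b.val % 2 = 0) ∧
        ∀ p : ZMod r × ZMod s, g p = (p.1, Sg v p.2 + b) := by
      intro g hg
      obtain ⟨u, v, a, b, hc, hp⟩ := hformL g hg
      have hu : u = false ∧ a = 0 := by
        by_contra hcon
        rw [not_and_or] at hcon
        apply hmu
        apply getMu hr3 NL hg hp
        rcases hcon with h | h
        · left
          simpa using h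
        · right
          exact h
      obtain ⟨hu0, ha0⟩ := hu
      subst hu0
      refine ⟨v, b, hc, fun p => ?_⟩
      rw [hp p, ha0]
      exact Prod.ext (by simp [Sg]) rfl
    by_cases hodd2 : ∃ g ∈ L, ∃ b : ZMod s,
        (∀ p : ZMod r × ZMod s, g p = (p.1, -p.2 + b)) ∧ b.val % 2 = 1
    · -- Case II.1 : columns, C_r
      right
      obtain ⟨g, hgL, b, hg, hbodd⟩ := hodd2
      have hcL : sigmaNu r s * g * (sigmaNu r s)⁻¹ ∈ L := NL.2 _ sigmaNu_mem_H _ hgL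
      have hcp : ∀ p : ZMod r × ZMod s,
          (sigmaNu r s * g * (sigmaNu r s)⁻¹) p = (p.1, -p.2 + b + 2) := by
        intro p
        rw [Equiv.Perm.mul_apply, Equiv.Perm.mul_apply, inv_apply_form hsnF, hg,
          sigmaNu_apply]
        refine Prod.ext ?_ (by dsimp; ring)
        dsimp [Sg]
        ring
      have hw2 : g * (sigmaNu r s * g * (sigmaNu r s)⁻¹) = uP r s (-2) := by
        apply Equiv.ext
        intro p
        rw [Equiv.Perm.mul_apply, hcp, hg, uP_apply]
        exact Prod.ext rfl (by dsimp; ring)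
      have huPL : uP r s (-2) ∈ L := hw2 ▸ mul_mem hgL hcL
      have huPe : ∀ e : ZMod s, e.val % 2 = 0 → uP r s e ∈ L := by
        intro e he
        obtain ⟨k, hk⟩ := even_reach hs2 hs0 e he
        have := pow_mem huPL k
        rw [uP_pow] at this
        have heq : ((k : ℕ) : ZMod s) * (-2) = e := by
          rw [← hk]
          ring
        rwa [heq] at this
      have hfibC : ∀ x y : ZMod r × ZMod s,
          Quotient.mk (orbitSetoid L) x = Quotient.mk (orbitSetoid L) y ↔
            x.1 = y.1 := by
        intro x y
        rw [mk_eq_iff]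
        constructor
        · rintro ⟨w, hwL, rfl⟩
          obtain ⟨v₀, b₀, hc₀, hw⟩ := hforms w hwL
          rw [hw y]
        · intro h
          by_cases hpar : x.2.val % 2 = y.2.val % 2
          · have he : (x.2 - y.2).val % 2 = 0 := sub_val_parity hs2 hs0 y.2 x.2 hpar.symm
            refine ⟨uP r s (x.2 - y.2), huPe _ he, ?_⟩
            rw [uP_apply]
            exact Prod.ext h.symm (by dsimp; ring)
          · have hgpar : (x.2 - (-y.2 + b)).val % 2 = 0 := by
              have h1 : (x.2 - (-y.2 + b)).val % 2 =
                  (x.2.val + (-(-y.2 + b)).val) % 2 := by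
                rw [sub_eq_add_neg, val_add_mod_two' hs2 hs0]
              have h2 := val_neg_mod_two s hs2 hs0 (-y.2 + b)
              have h3 := val_add_mod_two' hs2 hs0 (-y.2) b
              have h4 := val_neg_mod_two s hs2 hs0 y.2
              have hx2 := Nat.mod_two_eq_zero_or_one x.2.val
              have hy2 := Nat.mod_two_eq_zero_or_one y.2.val
              have hb2 := Nat.mod_two_eq_zero_or_one b.val
              omega
            refine ⟨uP r s (x.2 - (-y.2 + b)) * g, mul_mem (huPe _ hgpar) hgL, ?_⟩
            rw [Equiv.Perm.mul_apply, hg, uP_apply]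
            exact Prod.ext h.symm (by dsimp; ring)
      exact ⟨r, hr3, iso_cycle_fst L hr3 hfibC⟩
    · -- Case II.2 : pure even vertical translations, C_{2r}
      right
      have htrans : ∀ g ∈ L, ∃ b : ZMod s, b.val % 2 = 0 ∧
          ∀ p : ZMod r × ZMod s, g p = (p.1, p.2 + b) := by
        intro g hg
        obtain ⟨v, b, hc, hp⟩ := hforms g hg
        cases v
        · exact ⟨b, hc.mp rfl, fun p => by rw [hp p]; rfl⟩
        · exfalso
          apply hodd2
          refine ⟨g, hg, b, fun p => by rw [hp p]; rfl, ?_⟩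
          have : ¬ (false = true) := by simp
          have hb := hc
          have hb2 := Nat.mod_two_eq_zero_or_one b.val
          rcases hb2 with h | h
          · exact absurd (hb.mpr h) this
          · exact h
      obtain ⟨⟨g₀, hg₀L⟩, hg₀ne⟩ := Subgroup.ne_bot_iff_exists_ne_one.mp hLbot
      have hg₀ne' : g₀ ≠ 1 := fun h => hg₀ne (Subtype.ext h)
      obtain ⟨b₀, hb₀e, hg₀⟩ := htrans g₀ hg₀L
      have hb₀0 : b₀ ≠ 0 := by
        intro h
        apply hg₀ne'
        apply Equiv.ext
        intro p
        rw [hg₀ p, h, Equiv.Perm.one_apply]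
        exact Prod.ext rfl (by simp)
      have hg₀uP : g₀ = uP r s b₀ := Equiv.ext fun p => by rw [hg₀ p, uP_apply]
      obtain ⟨k2, hk2⟩ := exists_mul_eq_two hsOpt hs0 b₀ hb₀0 hb₀e
      have huP2 : uP r s 2 ∈ L := by
        have := pow_mem hg₀L k2
        rw [hg₀uP, uP_pow, hk2] at this
        exact this
      have hfib2 : ∀ x y : ZMod r × ZMod s,
          Quotient.mk (orbitSetoid L) x = Quotient.mk (orbitSetoid L) y ↔
            (x.1 = y.1 ∧ x.2.val % 2 = y.2.val % 2) := by
        intro x y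
        rw [mk_eq_iff]
        constructor
        · rintro ⟨w, hwL, rfl⟩
          obtain ⟨bw, hbwe, hw⟩ := htrans w hwL
          rw [hw y]
          refine ⟨rfl, ?_⟩
          dsimp
          have h1 := val_add_mod_two' hs2 hs0 y.2 bw
          have hx2 := Nat.mod_two_eq_zero_or_one y.2.val
          omega
        · rintro ⟨h1, h2⟩
          have he : (x.2 - y.2).val % 2 = 0 := sub_val_parity hs2 hs0 y.2 x.2 h2.symm
          have h2d : 2 ∣ (x.2 - y.2).val := by omega
          refine ⟨uP r s 2 ^ ((x.2 - y.2).val / 2), pow_mem huP2 _, ?_⟩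
          rw [uP_pow]
          have hval : (((x.2 - y.2).val / 2 : ℕ) : ZMod s) * 2 = x.2 - y.2 := by
            have hh : (((x.2 - y.2).val / 2 : ℕ) : ZMod s) * 2 =
                ((2 * ((x.2 - y.2).val / 2) : ℕ) : ZMod s) := by push_cast; ring
            rw [hh, Nat.mul_div_cancel' h2d, ZMod.natCast_val, ZMod.cast_id]
          rw [hval, uP_apply]
          exact Prod.ext h1.symm (by dsimp; ring)
      exact ⟨2 * r, by omega, iso_cycle_two_r L hr3 hrodd hs2 hs0 hs1 hfib2⟩

end Part1

end Aux

/-- for `(r,s)` of the form `(p,4)` or `(p,2q)` with `p`, `q` odd primes,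
every normal quotient of `(Γ(r,s), H(r,s))` by a nontrivial normal subgroup is degenerate,
the quotient by `⟨μ⟩` is `C_s`, the quotient by `⟨ν²⟩` is `C_{2r}`, and the pair is basic
of cycle type. -/
theorem stmt7 (r s : ℕ)
    (h : (r.Prime ∧ Odd r ∧ s = 4) ∨
      (∃ q : ℕ, r.Prime ∧ Odd r ∧ q.Prime ∧ Odd q ∧ s = 2 * q)) :
    (∀ L : Subgroup (Equiv.Perm (ZMod r × ZMod s)), NormalIn L (Hgroup r s) → L ≠ ⊥ →
      Nat.card (Quotient (orbitSetoid L)) ≤ 2 ∨ IsoCycle (quotientGraph (Gamma r s) L)) ∧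
    Nonempty (quotientGraph (Gamma r s) (Subgroup.closure {mu r s}) ≃g
      SimpleGraph.cycleGraph s) ∧
    Nonempty (quotientGraph (Gamma r s) (Subgroup.closure {nuSq r s}) ≃g
      SimpleGraph.cycleGraph (2 * r)) ∧
    BasicOfCycleType (Gamma r s) (Hgroup r s) := by
  have hrP : r.Prime := by rcases h with ⟨h1, _, _⟩ | ⟨q, h1, _⟩; exacts [h1, h1]
  have hrodd : Odd r := by rcases h with ⟨_, h1, _⟩ | ⟨q, _, h1, _⟩; exacts [h1, h1]
  have hsOpt : s = 4 ∨ ∃ q : ℕ, q.Prime ∧ Odd q ∧ s = 2 * q := by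
    rcases h with ⟨_, _, h1⟩ | ⟨q, _, _, hq, hqo, h1⟩
    · exact Or.inl h1
    · exact Or.inr ⟨q, hq, hqo, h1⟩
  have hr2 := hrP.two_le
  have hrm : r % 2 = 1 := Nat.odd_iff.mp hrodd
  have hr3 : 3 ≤ r := by omega
  have hs4 : 4 ≤ s := by
    rcases hsOpt with rfl | ⟨q, hq, hqodd, rfl⟩
    · omega
    · have h1 := hq.two_le
      have h2 := Nat.odd_iff.mp hqodd
      omega
  have hs2 : 2 ∣ s := by
    rcases hsOpt with rfl | ⟨q, _, _, rfl⟩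
    · omega
    · exact Dvd.intro q rfl
  refine ⟨part1lemma hrP hrodd hsOpt, part2lemma hr3 hs4,
    part3lemma hr3 hrodd hs4 hs2, part1lemma hrP hrodd hsOpt, ?_⟩
  exact ⟨Subgroup.closure {nuSq r s}, normalIn_nuSq hs2 (by omega) (by omega),
    closure_nuSq_ne_bot hs4, ⟨2 * r, by omega, part3lemma hr3 hrodd hs4 hs2⟩⟩

end OG4
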